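/- Let A, B and C be (bi)graded k-algebras. The following two conditions are equivalent: (1) C ≅ A #_R B as (bi)graded algebras for some (bi)graded k-linear map R : B ⊗ A → A ⊗ B making A #_R B an R-smash product; (2) there exist (bi)graded algebra homomorphisms f_A : A → C and f_B : B → C such that m_C ∘ (f_A ⊗ f_B) : A ⊗ B → C is an isomorphism of (bi)graded vector spaces, where m_C is the multiplication of C. In this case, R = (m_C ∘ (f_A ⊗ f_B))^{-1} ∘ m_C ∘ (f_B ⊗ f_A). -/
import Mathlib


open CategoryTheory Abelian DirectSum
open scoped TensorProduct DirectSum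

noncomputable section

section Smash
variable (k : Type) [Field k] {A B C : Type*}
  [Ring A] [Algebra k A] [Ring B] [Algebra k B] [Ring C] [Algebra k C]

/-- The multiplication `(m_A ⊗ m_B) ∘ (id_A ⊗ R ⊗ id_B)` on `A ⊗ B` determined by a
braiding map `R : B ⊗ A → A ⊗ B`, as a map on the tensor square. -/
def smashMulMap (R : B ⊗[k] A →ₗ[k] A ⊗[k] B) :
    (A ⊗[k] B) ⊗[k] (A ⊗[k] B) →ₗ[k] A ⊗[k] B :=
  (TensorProduct.map (LinearMap.mul' k A) (LinearMap.mul' k B)).comp <|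
    ((TensorProduct.assoc k A A (B ⊗[k] B)).symm.toLinearMap).comp <|
      (TensorProduct.map LinearMap.id (TensorProduct.assoc k A B B).toLinearMap).comp <|
        (TensorProduct.map LinearMap.id (TensorProduct.map R LinearMap.id)).comp <|
          (TensorProduct.map LinearMap.id
            (TensorProduct.assoc k B A B).symm.toLinearMap).comp
            (TensorProduct.assoc k A B (A ⊗[k] B)).toLinearMap

/-- The multiplication of the smash product `A #_R B`. -/
def smashMul (R : B ⊗[k] A →ₗ[k] A ⊗[k] B) (x y : A ⊗[k] B) : A ⊗[k] B :=
  smashMulMap k R (x ⊗ₜ y)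

/-- `A #_R B` is an `R`-smash product: the multiplication determined by `R` is
associative with unit `1 ⊗ 1`. -/
def IsSmashProduct (R : B ⊗[k] A →ₗ[k] A ⊗[k] B) : Prop :=
  (∀ x y z : A ⊗[k] B, smashMul k R (smashMul k R x y) z = smashMul k R x (smashMul k R y z)) ∧
  (∀ x : A ⊗[k] B, smashMul k R ((1 : A) ⊗ₜ (1 : B)) x = x) ∧
  (∀ x : A ⊗[k] B, smashMul k R x ((1 : A) ⊗ₜ (1 : B)) = x)

/-- The normality condition `R(b ⊗ 1) = 1 ⊗ b`, `R(1 ⊗ a) = a ⊗ 1`. -/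
def IsNormal (R : B ⊗[k] A →ₗ[k] A ⊗[k] B) : Prop :=
  (∀ b : B, R (b ⊗ₜ 1) = 1 ⊗ₜ b) ∧ (∀ a : A, R (1 ⊗ₜ a) = a ⊗ₜ 1)

/-- The induced grading on a tensor product of graded vector spaces. -/
def tensorGrading {ι : Type} [AddCommMonoid ι]
    (𝒜 : ι → Submodule k A) (ℬ : ι → Submodule k B) (d : ι) : Submodule k (A ⊗[k] B) :=
  ⨆ (p : ι × ι) (_ : p.1 + p.2 = d),
    LinearMap.range (TensorProduct.map (𝒜 p.1).subtype (ℬ p.2).subtype)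

/-- `e : A ⊗ B ≃ C` realizes `C` as the smash product `A #_R B`, as graded algebras. -/
def IsSmashIso {ι : Type} [AddCommMonoid ι]
    (𝒜 : ι → Submodule k A) (ℬ : ι → Submodule k B) (𝒞 : ι → Submodule k C)
    (R : B ⊗[k] A →ₗ[k] A ⊗[k] B) (e : A ⊗[k] B ≃ₗ[k] C) : Prop :=
  e ((1 : A) ⊗ₜ (1 : B)) = 1 ∧
  (∀ x y : A ⊗[k] B, e (smashMul k R x y) = e x * e y) ∧
  (∀ d, (tensorGrading k 𝒜 ℬ d).map e.toLinearMap = 𝒞 d)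

end Smash

/-- The map `m_C ∘ (f_A ⊗ f_B) : A ⊗ B → C`. -/
def mulComp {k : Type} [Field k] {A B C : Type}
    [Ring A] [Algebra k A] [Ring B] [Algebra k B] [Ring C] [Algebra k C]
    (fA : A →ₐ[k] C) (fB : B →ₐ[k] C) : A ⊗[k] B →ₗ[k] C :=
  (LinearMap.mul' k C).comp (TensorProduct.map fA.toLinearMap fB.toLinearMap)

section Aux
set_option maxHeartbeats 1000000 in
lemma smash_rest {k : Type} [Field k] {A B : Type*}
    [Ring A] [Algebra k A] [Ring B] [Algebra k B] (a : A) (b' : B) (z : A ⊗[k] B) :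
    (TensorProduct.map (LinearMap.mul' k A) (LinearMap.mul' k B))
      ((TensorProduct.assoc k A A (B ⊗[k] B)).symm
        ((TensorProduct.map LinearMap.id (TensorProduct.assoc k A B B).toLinearMap)
          (a ⊗ₜ (z ⊗ₜ b')))) =
      TensorProduct.map (LinearMap.mulLeft k a) (LinearMap.mulRight k b') z := by
  induction z using TensorProduct.induction_on with
  | zero =>
    simp only [TensorProduct.zero_tmul, TensorProduct.tmul_zero, LinearMap.map_zero,
      LinearEquiv.map_zero]
  | tmul r s =>
    simp only [TensorProduct.map_tmul, LinearEquiv.coe_coe, TensorProduct.assoc_tmul,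
      LinearMap.id_coe, id_eq, TensorProduct.assoc_symm_tmul, LinearMap.mul'_apply,
      LinearMap.mulLeft_apply, LinearMap.mulRight_apply]
  | add u v hu hv =>
    simp only [TensorProduct.add_tmul, TensorProduct.tmul_add, LinearMap.map_add,
      LinearEquiv.map_add] at hu hv ⊢
    rw [hu, hv]

lemma smashMul_tmul {k : Type} [Field k] {A B : Type*}
    [Ring A] [Algebra k A] [Ring B] [Algebra k B]
    (R : B ⊗[k] A →ₗ[k] A ⊗[k] B) (a a' : A) (b b' : B) :
    smashMul k R (a ⊗ₜ b) (a' ⊗ₜ b') =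
      TensorProduct.map (LinearMap.mulLeft k a) (LinearMap.mulRight k b') (R (b ⊗ₜ a')) := by
  rw [smashMul, smashMulMap]
  simp only [LinearMap.comp_apply, TensorProduct.assoc_tmul, TensorProduct.map_tmul,
    LinearMap.id_coe, id_eq, TensorProduct.assoc_symm_tmul]
  exact smash_rest a b' (R (b ⊗ₜ a'))
end Aux

section Aux2
variable {k : Type} [Field k] {ι : Type} [AddCommMonoid ι]
  {A B C : Type} [Ring A] [Algebra k A] [Ring B] [Algebra k B] [Ring C] [Algebra k C]

lemma smashMul_zero_left (R : B ⊗[k] A →ₗ[k] A ⊗[k] B) (y : A ⊗[k] B) :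
    smashMul k R 0 y = 0 := by simp [smashMul, TensorProduct.zero_tmul]

lemma smashMul_zero_right (R : B ⊗[k] A →ₗ[k] A ⊗[k] B) (x : A ⊗[k] B) :
    smashMul k R x 0 = 0 := by simp [smashMul, TensorProduct.tmul_zero]

lemma smashMul_add_left (R : B ⊗[k] A →ₗ[k] A ⊗[k] B) (x x' y : A ⊗[k] B) :
    smashMul k R (x + x') y = smashMul k R x y + smashMul k R x' y := by
  simp [smashMul, TensorProduct.add_tmul]

lemma smashMul_add_right (R : B ⊗[k] A →ₗ[k] A ⊗[k] B) (x y y' : A ⊗[k] B) :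
    smashMul k R x (y + y') = smashMul k R x y + smashMul k R x y' := by
  simp [smashMul, TensorProduct.tmul_add]

lemma mulComp_tmul (fA : A →ₐ[k] C) (fB : B →ₐ[k] C) (a : A) (b : B) :
    mulComp fA fB (a ⊗ₜ b) = fA a * fB b := by
  simp [mulComp, LinearMap.mul'_apply]

lemma mulComp_mapLR (fA : A →ₐ[k] C) (fB : B →ₐ[k] C) (a : A) (b' : B) (z : A ⊗[k] B) :
    mulComp fA fB (TensorProduct.map (LinearMap.mulLeft k a) (LinearMap.mulRight k b') z) =
      fA a * mulComp fA fB z * fB b' := by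
  induction z using TensorProduct.induction_on with
  | zero => simp
  | tmul r s => simp [mulComp_tmul, mul_assoc]
  | add u v hu hv => simp only [map_add, hu, hv, mul_add, add_mul]

lemma mulComp_smashMul (fA : A →ₐ[k] C) (fB : B →ₐ[k] C) (R : B ⊗[k] A →ₗ[k] A ⊗[k] B)
    (hR : ∀ z, mulComp fA fB (R z) = mulComp fB fA z) (x y : A ⊗[k] B) :
    mulComp fA fB (smashMul k R x y) = mulComp fA fB x * mulComp fA fB y := by
  induction x using TensorProduct.induction_on with
  | zero => simp [smashMul_zero_left]
  | add u v hu hv => simp only [smashMul_add_left, map_add, hu, hv, add_mul]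
  | tmul a b =>
    induction y using TensorProduct.induction_on with
    | zero => simp [smashMul_zero_right]
    | add u v hu hv => simp only [smashMul_add_right, map_add, hu, hv, mul_add]
    | tmul a' b' =>
      rw [smashMul_tmul, mulComp_mapLR, hR, mulComp_tmul, mulComp_tmul, mulComp_tmul]
      simp only [mul_assoc]

lemma mem_tensorGrading_tmul (𝒜 : ι → Submodule k A) (ℬ : ι → Submodule k B)
    {p q d : ι} (hpq : p + q = d) {a : A} (ha : a ∈ 𝒜 p) {b : B} (hb : b ∈ ℬ q) :
    a ⊗ₜ b ∈ tensorGrading k 𝒜 ℬ d := by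
  apply Submodule.mem_iSup_of_mem (⟨p, q⟩ : ι × ι)
  apply Submodule.mem_iSup_of_mem hpq
  exact ⟨(⟨a, ha⟩ : 𝒜 p) ⊗ₜ (⟨b, hb⟩ : ℬ q), by simp⟩

lemma tensorGrading_le (𝒜 : ι → Submodule k A) (ℬ : ι → Submodule k B) {d : ι}
    {S : Submodule k (A ⊗[k] B)}
    (h : ∀ p q, p + q = d → ∀ a ∈ 𝒜 p, ∀ b ∈ ℬ q, a ⊗ₜ b ∈ S) :
    tensorGrading k 𝒜 ℬ d ≤ S := by
  refine iSup_le fun p => iSup_le fun hpq => ?_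
  rintro _ ⟨t, rfl⟩
  induction t using TensorProduct.induction_on with
  | zero => simp only [map_zero]; exact S.zero_mem
  | tmul a b =>
    simpa using h p.1 p.2 hpq a.1 a.2 b.1 b.2
  | add u v hu hv => rw [map_add]; exact S.add_mem hu hv

end Aux2

section Main
variable {k : Type} [Field k] {ι : Type} [AddCommMonoid ι] [DecidableEq ι]
  {A B C : Type} [Ring A] [Algebra k A] [Ring B] [Algebra k B] [Ring C] [Algebra k C]

lemma part2 (𝒜 : ι → Submodule k A) (ℬ : ι → Submodule k B) (𝒞 : ι → Submodule k C)
    (gC : GradedAlgebra 𝒞) (fA : A →ₐ[k] C) (fB : B →ₐ[k] C)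
    (hA : ∀ i, (𝒜 i).map fA.toLinearMap ≤ 𝒞 i)
    (hB : ∀ i, (ℬ i).map fB.toLinearMap ≤ 𝒞 i)
    (hbij : Function.Bijective (mulComp fA fB))
    (hgr : ∀ d, (tensorGrading k 𝒜 ℬ d).map (mulComp fA fB) = 𝒞 d) :
    ∃ R : B ⊗[k] A →ₗ[k] A ⊗[k] B,
      (∀ d, (tensorGrading k ℬ 𝒜 d).map R ≤ tensorGrading k 𝒜 ℬ d) ∧
      IsSmashProduct k R ∧
      IsSmashIso k 𝒜 ℬ 𝒞 R (LinearEquiv.ofBijective (mulComp fA fB) hbij) ∧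
      (mulComp fA fB).comp R = mulComp fB fA := by
  haveI := gC
  set φ := mulComp fA fB with hφ
  set e := LinearEquiv.ofBijective φ hbij with he'
  have he : ∀ x, e x = φ x := fun _ => rfl
  set R : B ⊗[k] A →ₗ[k] A ⊗[k] B := e.symm.toLinearMap.comp (mulComp fB fA) with hRdef
  have hR : ∀ z, φ (R z) = mulComp fB fA z := fun z => by
    show φ (e.symm (mulComp fB fA z)) = _
    rw [← he]; exact e.apply_symm_apply _
  have hmul : ∀ x y, φ (smashMul k R x y) = φ x * φ y := mulComp_smashMul fA fB R hR
  have hRba : ∀ (b : B) (a : A), R (b ⊗ₜ a) = e.symm (fB b * fA a) := fun b a => by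
    show e.symm (mulComp fB fA (b ⊗ₜ a)) = _
    rw [mulComp_tmul]
  have hnormA : ∀ a : A, R ((1 : B) ⊗ₜ a) = a ⊗ₜ (1 : B) := fun a => by
    rw [hRba, LinearEquiv.symm_apply_eq, he, hφ, mulComp_tmul]
    simp
  have hnormB : ∀ b : B, R (b ⊗ₜ (1 : A)) = (1 : A) ⊗ₜ b := fun b => by
    rw [hRba, LinearEquiv.symm_apply_eq, he, hφ, mulComp_tmul]
    simp
  have hone : φ ((1 : A) ⊗ₜ (1 : B)) = 1 := by rw [hφ, mulComp_tmul]; simp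
  refine ⟨R, ?_, ⟨?_, ?_, ?_⟩, ⟨?_, ?_, ?_⟩, LinearMap.ext hR⟩
  · -- grading of R
    intro d
    rw [Submodule.map_le_iff_le_comap]
    apply tensorGrading_le
    intro p q hpq b hb a ha
    simp only [Submodule.mem_comap]
    rw [hRba]
    have hc : fB b * fA a ∈ 𝒞 d := by
      rw [← hpq]
      exact SetLike.mul_mem_graded (hB p ⟨b, hb, rfl⟩) (hA q ⟨a, ha, rfl⟩)
    rw [← hgr d] at hc
    obtain ⟨y, hy, hyx⟩ := hc
    rw [← hyx, ← he, e.symm_apply_apply]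
    exact hy
  · -- assoc
    intro x y z
    apply hbij.1
    rw [hmul, hmul, hmul, hmul, mul_assoc]
  · intro x; apply hbij.1; rw [hmul, hone, one_mul]
  · intro x; apply hbij.1; rw [hmul, hone, mul_one]
  · rw [he, hone]
  · intro x y; rw [he, he, he, hmul]
  · intro d
    have : e.toLinearMap = φ := rfl
    rw [this]
    exact hgr d
end Main

section Main2
variable {k : Type} [Field k] {ι : Type} [AddCommMonoid ι] [DecidableEq ι]
  {A B C : Type} [Ring A] [Algebra k A] [Ring B] [Algebra k B] [Ring C] [Algebra k C]

lemma part1 (𝒜 : ι → Submodule k A) (ℬ : ι → Submodule k B) (𝒞 : ι → Submodule k C)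
    (gA : GradedAlgebra 𝒜) (gB : GradedAlgebra ℬ)
    (R : B ⊗[k] A →ₗ[k] A ⊗[k] B) (hsm : IsSmashProduct k R)
    (e : A ⊗[k] B ≃ₗ[k] C) (hiso : IsSmashIso k 𝒜 ℬ 𝒞 R e) :
    ∃ (fA : A →ₐ[k] C) (fB : B →ₐ[k] C),
      (∀ i, (𝒜 i).map fA.toLinearMap ≤ 𝒞 i) ∧
      (∀ i, (ℬ i).map fB.toLinearMap ≤ 𝒞 i) ∧
      Function.Bijective (mulComp fA fB) ∧
      ∀ d, (tensorGrading k 𝒜 ℬ d).map (mulComp fA fB) = 𝒞 d := by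
  haveI := gA; haveI := gB
  obtain ⟨hassoc, hul, hur⟩ := hsm
  obtain ⟨h1, h2, h3⟩ := hiso
  have hmapid : ∀ z : A ⊗[k] B,
      TensorProduct.map (LinearMap.mulLeft k (1 : A)) (LinearMap.mulRight k (1 : B)) z = z := by
    intro z
    rw [LinearMap.mulLeft_one, LinearMap.mulRight_one, TensorProduct.map_id, LinearMap.id_apply]
  have hnormA : ∀ a : A, R ((1 : B) ⊗ₜ a) = a ⊗ₜ (1 : B) := fun a => by
    have := hul (a ⊗ₜ (1 : B))
    rwa [smashMul_tmul, hmapid] at this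
  have hnormB : ∀ b : B, R (b ⊗ₜ (1 : A)) = (1 : A) ⊗ₜ b := fun b => by
    have := hur ((1 : A) ⊗ₜ b)
    rwa [smashMul_tmul, hmapid] at this
  set fA : A →ₐ[k] C := AlgHom.ofLinearMap
    (e.toLinearMap.comp ((TensorProduct.mk k A B).flip 1)) h1
    (fun a a' => by
      show e ((a * a') ⊗ₜ 1) = e (a ⊗ₜ 1) * e (a' ⊗ₜ 1)
      rw [← h2, smashMul_tmul, hnormA, TensorProduct.map_tmul, LinearMap.mulLeft_apply,
        LinearMap.mulRight_apply, mul_one]) with hfA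
  set fB : B →ₐ[k] C := AlgHom.ofLinearMap
    (e.toLinearMap.comp (TensorProduct.mk k A B 1)) h1
    (fun b b' => by
      show e (1 ⊗ₜ (b * b')) = e (1 ⊗ₜ b) * e (1 ⊗ₜ b')
      rw [← h2, smashMul_tmul, hnormB, TensorProduct.map_tmul, LinearMap.mulLeft_apply,
        LinearMap.mulRight_apply, one_mul]) with hfB
  have hfAa : ∀ a : A, fA a = e (a ⊗ₜ 1) := fun a => rfl
  have hfBb : ∀ b : B, fB b = e (1 ⊗ₜ b) := fun b => rfl
  have heq : mulComp fA fB = e.toLinearMap := by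
    apply TensorProduct.ext'
    intro a b
    rw [mulComp_tmul, hfAa, hfBb, ← h2, smashMul_tmul, hnormA, TensorProduct.map_tmul,
      LinearMap.mulLeft_apply, LinearMap.mulRight_apply, mul_one, one_mul]
    rfl
  refine ⟨fA, fB, ?_, ?_, ?_, ?_⟩
  · rintro i _ ⟨a, ha, rfl⟩
    rw [← h3 i]
    exact ⟨a ⊗ₜ 1, mem_tensorGrading_tmul 𝒜 ℬ (add_zero i) ha (SetLike.one_mem_graded ℬ), rfl⟩
  · rintro i _ ⟨b, hb, rfl⟩
    rw [← h3 i]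
    exact ⟨1 ⊗ₜ b, mem_tensorGrading_tmul 𝒜 ℬ (zero_add i) (SetLike.one_mem_graded 𝒜) hb, rfl⟩
  · have : ⇑(mulComp fA fB) = ⇑e := by rw [heq]; rfl
    rw [this]; exact e.bijective
  · intro d; rw [heq]; exact h3 d
end Main2

/-- **Statement 2** (Caenepeel–Ionescu–Militaru–Zhang, Theorem 2.10).
For (bi)graded algebras `A`, `B`, `C` (graded by an arbitrary additive index monoid `ι`,
which covers both the graded case `ι = ℤ` and the bigraded case `ι = ℤ × ℤ`), the following
are equivalent:
(1) `C ≅ A #_R B` as graded algebras for some graded linear map `R : B ⊗ A → A ⊗ B`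
making `A #_R B` an `R`-smash product;
(2) there are graded algebra maps `f_A : A → C`, `f_B : B → C` such that
`m_C ∘ (f_A ⊗ f_B) : A ⊗ B → C` is an isomorphism of graded vector spaces.
In this case `R = (m_C ∘ (f_A ⊗ f_B))⁻¹ ∘ m_C ∘ (f_B ⊗ f_A)`, i.e.
`(m_C ∘ (f_A ⊗ f_B)) ∘ R = m_C ∘ (f_B ⊗ f_A)`. -/
theorem statement_2 {k : Type} [Field k] {ι : Type} [AddCommMonoid ι] [DecidableEq ι]
    {A B C : Type} [Ring A] [Algebra k A] [Ring B] [Algebra k B] [Ring C] [Algebra k C]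
    (𝒜 : ι → Submodule k A) (ℬ : ι → Submodule k B) (𝒞 : ι → Submodule k C)
    (gA : GradedAlgebra 𝒜) (gB : GradedAlgebra ℬ) (gC : GradedAlgebra 𝒞) :
    ((∃ R : B ⊗[k] A →ₗ[k] A ⊗[k] B,
        (∀ d, (tensorGrading k ℬ 𝒜 d).map R ≤ tensorGrading k 𝒜 ℬ d) ∧
        IsSmashProduct k R ∧
        ∃ e : A ⊗[k] B ≃ₗ[k] C, IsSmashIso k 𝒜 ℬ 𝒞 R e) ↔
      (∃ (fA : A →ₐ[k] C) (fB : B →ₐ[k] C),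
        (∀ i, (𝒜 i).map fA.toLinearMap ≤ 𝒞 i) ∧
        (∀ i, (ℬ i).map fB.toLinearMap ≤ 𝒞 i) ∧
        Function.Bijective (mulComp fA fB) ∧
        ∀ d, (tensorGrading k 𝒜 ℬ d).map (mulComp fA fB) = 𝒞 d)) ∧
    (∀ (fA : A →ₐ[k] C) (fB : B →ₐ[k] C),
        (∀ i, (𝒜 i).map fA.toLinearMap ≤ 𝒞 i) →
        (∀ i, (ℬ i).map fB.toLinearMap ≤ 𝒞 i) →
        (hbij : Function.Bijective (mulComp fA fB)) →
        (∀ d, (tensorGrading k 𝒜 ℬ d).map (mulComp fA fB) = 𝒞 d) →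
        ∃ R : B ⊗[k] A →ₗ[k] A ⊗[k] B,
          (∀ d, (tensorGrading k ℬ 𝒜 d).map R ≤ tensorGrading k 𝒜 ℬ d) ∧
          IsSmashProduct k R ∧
          IsSmashIso k 𝒜 ℬ 𝒞 R (LinearEquiv.ofBijective (mulComp fA fB) hbij) ∧
          (mulComp fA fB).comp R = mulComp fB fA) := by
  constructor
  · constructor
    · rintro ⟨R, hRgr, hsm, e, hiso⟩
      exact part1 𝒜 ℬ 𝒞 gA gB R hsm e hiso
    · rintro ⟨fA, fB, hA, hB, hbij, hgr⟩
      obtain ⟨R, h1, h2, h3, _⟩ := part2 𝒜 ℬ 𝒞 gC fA fB hA hB hbij hgr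
      exact ⟨R, h1, h2, _, h3⟩
  · intro fA fB hA hB hbij hgr
    exact part2 𝒜 ℬ 𝒞 gC fA fB hA hB hbij hgr

end
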